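/- If every accumulator of a support-arena play has at most m entries, then the play is the projection of a play of the (|S₀|·|Q|^{m+1})-population game, constructed by initially placing |Q|^{m+1} agents on each state of S₀ and at each step splitting the agents in each state evenly among the outgoing edges of the transfer graph. -/

import Mathlib

variable {Q A : Type}

/-- The NFA transition relation is complete. -/
def Complete (Δ : Q → A → Q → Prop) : Prop := ∀ q a, ∃ p, Δ q a p

/-- Domain of a transfer graph. -/
def dom (G : Set (Q × Q)) : Set Q := {q | ∃ r, (q, r) ∈ G}

/-- Image of a transfer graph. -/
def im (G : Set (Q × Q)) : Set Q := {r | ∃ q, (q, r) ∈ G}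

/-- An (infinite) play in the support arena: `G n` is the transfer graph used
between the supports `S n` and `S (n+1)`, compatible with the letter `act n`. -/
structure SupportPlay (Δ : Q → A → Q → Prop) (q0 : Q) where
  S : ℕ → Set Q
  act : ℕ → A
  G : ℕ → Set (Q × Q)
  init : S 0 = {q0}
  compat : ∀ n, ∀ p ∈ G n, Δ p.1 (act n) p.2
  hdom : ∀ n, dom (G n) = S n
  him : ∀ n, im (G n) = S (n + 1)

/-- A play of the m-population game: all agents start in q0, and at each step every
agent follows a transition labelled by the common letter. -/
def IsPopPlay (Δ : Q → A → Q → Prop) (q0 : Q) {m : ℕ}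
    (ρ : ℕ → Fin m → Q) (acts : ℕ → A) : Prop :=
  ρ 0 = (fun _ => q0) ∧ ∀ n j, Δ (ρ n j) (acts n) (ρ (n + 1) j)

/-- The play of the m-population game `(ρ, acts)` projects onto the support-arena
play `P`: supports are the sets of occupied states, transfer graphs the agent-used edges. -/
def ProjectsTo {Δ : Q → A → Q → Prop} {q0 : Q} {m : ℕ}
    (ρ : ℕ → Fin m → Q) (acts : ℕ → A) (P : SupportPlay Δ q0) : Prop :=
  (∀ n, P.S n = {q | ∃ j, ρ n j = q}) ∧
  (∀ n, P.act n = acts n) ∧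
  (∀ n, P.G n = {p | ∃ j, ρ n j = p.1 ∧ ρ (n + 1) j = p.2})

/-- A support-arena play is realisable if it is the projection of a play of the
m-population game for some finite m. -/
def Realisable {Δ : Q → A → Q → Prop} {q0 : Q} (P : SupportPlay Δ q0) : Prop :=
  ∃ (m : ℕ) (ρ : ℕ → Fin m → Q) (acts : ℕ → A),
    IsPopPlay Δ q0 ρ acts ∧ ProjectsTo ρ acts P

/-- An accumulator: a successor-closed sequence of subsets of the supports. -/
def IsAccumulator (S : ℕ → Set Q) (G : ℕ → Set (Q × Q)) (T : ℕ → Set Q) : Prop :=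
  (∀ j, T j ⊆ S j) ∧ ∀ j s t, s ∈ T j → (s, t) ∈ G j → t ∈ T (j + 1)

/-- The entries of an accumulator: edges entering the accumulator from outside. -/
def Entries (G : ℕ → Set (Q × Q)) (T : ℕ → Set Q) : Set (ℕ × Q × Q) :=
  {e | (e.2.1, e.2.2) ∈ G e.1 ∧ e.2.1 ∉ T e.1 ∧ e.2.2 ∈ T (e.1 + 1)}

/-- A play has bounded capacity if the number of entries of its accumulators is
uniformly bounded. -/
def BoundedCapacity {Δ : Q → A → Q → Prop} {q0 : Q} (P : SupportPlay Δ q0) : Prop :=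
  ∃ B : ℕ, ∀ T, IsAccumulator P.S P.G T → (Entries P.G T).encard ≤ B

namespace Stmt5Aux

open Finset
open scoped Classical

variable {Q A : Type} [Fintype Q] {Δ : Q → A → Q → Prop} {q0 : Q}

/-- split a value as evenly as possible over a finset -/
lemma split_exists (F : Finset Q) (cv : ℕ) :
    ∃ g : Q → ℕ, (∀ t, t ∉ F → g t = 0) ∧ (F.Nonempty → ∑ t ∈ F, g t = cv) ∧
      (∀ t ∈ F, cv / F.card ≤ g t) ∧ (∀ t ∈ F, g t ≤ (cv + (F.card - 1)) / F.card) := by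
  rcases F.eq_empty_or_nonempty with h | h
  · refine ⟨fun _ => 0, fun _ _ => rfl, ?_, ?_, ?_⟩ <;> simp [h]
  · have hd : 0 < F.card := Finset.card_pos.mpr h
    obtain ⟨E, hE, hEcard⟩ :=
      Finset.exists_subset_card_eq (s := F) (n := cv % F.card) (le_of_lt (Nat.mod_lt _ hd))
    refine ⟨fun t => if t ∈ F then cv / F.card + (if t ∈ E then 1 else 0) else 0,
      ?_, ?_, ?_, ?_⟩
    · intro t ht; simp [ht]
    · intro _
      have h1 : ∑ t ∈ F, (if t ∈ F then cv / F.card + (if t ∈ E then 1 else 0) else 0)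
          = ∑ t ∈ F, (cv / F.card + (if t ∈ E then 1 else 0)) := by
        apply Finset.sum_congr rfl; intro t ht; simp [ht]
      rw [h1, Finset.sum_add_distrib, Finset.sum_const, smul_eq_mul]
      have h2 : ∑ t ∈ F, (if t ∈ E then (1:ℕ) else 0) = E.card := by
        rw [Finset.sum_ite_mem, Finset.inter_eq_right.mpr hE, Finset.sum_const,
          smul_eq_mul, mul_one]
      rw [h2, hEcard, Nat.div_add_mod]
    · intro t ht; simp [ht]
    · intro t ht
      simp only [ht, if_true]
      by_cases htE : t ∈ E
      · simp only [htE, if_true]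
        have hmod : 1 ≤ cv % F.card := by
          have : 0 < E.card := Finset.card_pos.mpr ⟨t, htE⟩
          omega
        rw [Nat.le_div_iff_mul_le hd, add_mul, one_mul, mul_comm]
        have hdm : F.card * (cv / F.card) + cv % F.card = cv := Nat.div_add_mod cv F.card
        omega
      · simp only [htE, if_false, add_zero]
        apply Nat.div_le_div_right
        omega

lemma numeric (q b D : ℕ) (hq : 2 ≤ q) (Pf : Finset Q) (hPne : Pf.Nonempty)
    (hPcard : Pf.card ≤ q) (cc dd ii kp : Q → ℕ)
    (hbD : D + 1 ≤ b) (hDdef : D = ∑ s ∈ Pf, (dd s - ii s))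
    (hi1 : ∀ s ∈ Pf, 1 ≤ ii s) (hid : ∀ s ∈ Pf, ii s ≤ dd s)
    (hdq : ∀ s ∈ Pf, dd s ≤ q)
    (hsum : q ^ b ≤ ∑ s ∈ Pf, cc s)
    (hk1 : ∀ s ∈ Pf, cc s ≤ kp s + (dd s - ii s) * ((cc s + (dd s - 1)) / dd s))
    (hk2 : ∀ s ∈ Pf, ii s * (cc s / dd s) ≤ kp s) :
    q ^ (b - D) ≤ ∑ s ∈ Pf, kp s := by
  rcases Nat.lt_or_ge D 2 with hD2 | hD2
  · interval_cases D
    · -- D = 0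
      have hall : ∀ s ∈ Pf, dd s - ii s = 0 := by
        intro s hs
        exact Finset.sum_eq_zero_iff.mp hDdef.symm s hs
      have hcc : ∀ s ∈ Pf, cc s ≤ kp s := by
        intro s hs
        have := hk1 s hs
        rw [hall s hs, zero_mul, add_zero] at this
        exact this
      simpa using le_trans hsum (Finset.sum_le_sum hcc)
    · -- D = 1
      have hex : ∃ s ∈ Pf, dd s - ii s ≠ 0 := by
        by_contra hno
        push_neg at hno
        have : (1:ℕ) = 0 := by rw [hDdef]; exact Finset.sum_eq_zero hno
        omega
      obtain ⟨st, hst, hstne⟩ := hex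
      have hsplit : dd st - ii st + ∑ s ∈ Pf.erase st, (dd s - ii s) = 1 := by
        rw [← Finset.add_sum_erase Pf (fun s => dd s - ii s) hst] at hDdef
        omega
      have hst1 : dd st - ii st = 1 := by omega
      have hsum0 : ∑ s ∈ Pf.erase st, (dd s - ii s) = 0 := by omega
      have herase0 : ∀ s ∈ Pf.erase st, dd s - ii s = 0 := by
        intro s hs
        exact Finset.sum_eq_zero_iff.mp hsum0 s hs
      have hdd2 : 2 ≤ dd st := by have := hi1 st hst; omega
      have hceil : (cc st + (dd st - 1)) / dd st ≤ cc st - cc st / 2 := by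
        rw [Nat.div_le_iff_le_mul_add_pred (by omega : 0 < dd st)]
        have h2 : 2 * (cc st - cc st / 2) ≤ dd st * (cc st - cc st / 2) :=
          Nat.mul_le_mul_right _ hdd2
        omega
      have hkpst : cc st / 2 ≤ kp st := by
        have hh := hk1 st hst
        rw [hst1, one_mul] at hh
        omega
      have hothers : ∀ s ∈ Pf.erase st, cc s ≤ kp s := by
        intro s hs
        have hh := hk1 s (Finset.mem_of_mem_erase hs)
        rw [herase0 s hs, zero_mul, add_zero] at hh
        exact hh
      have hA : kp st + ∑ s ∈ Pf.erase st, kp s = ∑ s ∈ Pf, kp s :=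
        Finset.add_sum_erase _ _ hst
      have hB : cc st + ∑ s ∈ Pf.erase st, cc s = ∑ s ∈ Pf, cc s :=
        Finset.add_sum_erase _ _ hst
      have hsum2 : ∑ s ∈ Pf.erase st, cc s ≤ ∑ s ∈ Pf.erase st, kp s :=
        Finset.sum_le_sum hothers
      have hq2 : q ^ (b-1) * 2 ≤ q ^ b := by
        have hbb : q ^ b = q ^ (b-1) * q := by
          rw [← pow_succ]
          congr 1
          omega
        rw [hbb]
        exact Nat.mul_le_mul_left _ hq
      omega
  · -- D ≥ 2
    obtain ⟨st, hst, hmax⟩ := Finset.exists_max_image Pf cc hPne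
    have h1 : ∑ s ∈ Pf, cc s ≤ Pf.card * cc st := by
      calc ∑ s ∈ Pf, cc s ≤ ∑ _s ∈ Pf, cc st := Finset.sum_le_sum (fun s hs => hmax s hs)
      _ = Pf.card * cc st := by rw [Finset.sum_const, smul_eq_mul]
    have h2 : q ^ b ≤ q * cc st := by
      calc q ^ b ≤ Pf.card * cc st := le_trans hsum h1
      _ ≤ q * cc st := Nat.mul_le_mul_right _ hPcard
    have hb1 : q ^ (b-1) ≤ cc st := by
      have hbb : q ^ b = q * q ^ (b-1) := by
        rw [← pow_succ']
        congr 1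
        omega
      rw [hbb] at h2
      exact Nat.le_of_mul_le_mul_left h2 (by omega)
    have hdd : 0 < dd st := by
      have h1 := hi1 st hst
      have h2 := hid st hst
      omega
    have h3 : cc st / q ≤ cc st / dd st := Nat.div_le_div_left (hdq st hst) hdd
    have h4 : q ^ (b-2) ≤ cc st / q := by
      have hbb : q ^ (b-1) / q = q ^ (b-2) := by
        have : q ^ (b-1) = q ^ (b-2) * q := by
          rw [← pow_succ]
          congr 1
          omega
        rw [this, Nat.mul_div_cancel _ (by omega : 0 < q)]
      rw [← hbb]
      exact Nat.div_le_div_right hb1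
    have h5 : q ^ (b-2) ≤ kp st := by
      have hii : cc st / dd st ≤ ii st * (cc st / dd st) :=
        Nat.le_mul_of_pos_left _ (hi1 st hst)
      exact le_trans (le_trans (le_trans h4 h3) hii) (hk2 st hst)
    have h6 : q ^ (b - D) ≤ q ^ (b-2) :=
      Nat.pow_le_pow_right (by omega) (by omega)
    exact le_trans (le_trans h6 h5)
      (Finset.single_le_sum (fun s _ => Nat.zero_le (kp s)) hst)

section Play

variable (P : SupportPlay Δ q0) (m : ℕ)

/-- outgoing neighbours -/
noncomputable def outF (n : ℕ) (s : Q) : Finset Q :=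
  Finset.univ.filter (fun t => (s, t) ∈ P.G n)

/-- out-degree -/
noncomputable def dF (n : ℕ) (s : Q) : ℕ := (outF P n s).card

/-- chosen flow out of a state, given its current count -/
noncomputable def flow (n : ℕ) (cn : Q → ℕ) (s : Q) : Q → ℕ :=
  Classical.choose (split_exists (outF P n s) (cn s))

/-- counts of agents -/
noncomputable def cnt : ℕ → Q → ℕ
  | 0 => fun s => if s = q0 then Fintype.card Q ^ (m + 1) else 0
  | (n+1) => fun t => ∑ s, flow P n (cnt n) s t

/-- the flows actually used -/
noncomputable def fl (n : ℕ) : Q → Q → ℕ := flow P n (cnt P m n)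

lemma cnt_succ (n : ℕ) (t : Q) : cnt P m (n+1) t = ∑ s, fl P m n s t := rfl

lemma fl_zero {n : ℕ} {s t : Q} (h : t ∉ outF P n s) : fl P m n s t = 0 :=
  (Classical.choose_spec (split_exists (outF P n s) (cnt P m n s))).1 t h

lemma fl_floor {n : ℕ} {s t : Q} (h : t ∈ outF P n s) :
    cnt P m n s / dF P n s ≤ fl P m n s t :=
  (Classical.choose_spec (split_exists (outF P n s) (cnt P m n s))).2.2.1 t h

lemma fl_ceil {n : ℕ} {s t : Q} (h : t ∈ outF P n s) :
    fl P m n s t ≤ (cnt P m n s + (dF P n s - 1)) / dF P n s :=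
  (Classical.choose_spec (split_exists (outF P n s) (cnt P m n s))).2.2.2 t h

lemma outF_nonempty {n : ℕ} {s : Q} (h : s ∈ P.S n) : (outF P n s).Nonempty := by
  rw [← P.hdom n] at h
  obtain ⟨t, ht⟩ := h
  exact ⟨t, by simp [outF, ht]⟩

lemma outF_empty {n : ℕ} {s : Q} (h : s ∉ P.S n) : outF P n s = ∅ := by
  rw [← P.hdom n] at h
  ext t; simp only [outF, mem_filter, mem_univ, true_and, Finset.notMem_empty, iff_false]
  exact fun he => h ⟨t, he⟩

lemma cnt_zero {n : ℕ} {s : Q} (h : s ∉ P.S n) : cnt P m n s = 0 := by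
  cases n with
  | zero =>
    have : s ≠ q0 := by rintro rfl; exact h (by rw [P.init]; rfl)
    simp [cnt, this]
  | succ n =>
    rw [cnt_succ]
    apply Finset.sum_eq_zero
    intro u _
    apply fl_zero
    intro hmem
    apply h
    rw [← P.him n]
    simp only [outF, mem_filter] at hmem
    exact ⟨u, hmem.2⟩

lemma fl_sum (n : ℕ) (s : Q) : ∑ t, fl P m n s t = cnt P m n s := by
  by_cases h : s ∈ P.S n
  · have hne := outF_nonempty P h
    have hz := fun t ht => fl_zero P m (n := n) (s := s) (t := t) ht
    have : ∑ t, fl P m n s t = ∑ t ∈ outF P n s, fl P m n s t := by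
      symm
      apply Finset.sum_subset (Finset.subset_univ _)
      intro t _ ht; exact hz t ht
    rw [this]
    exact (Classical.choose_spec (split_exists (outF P n s) (cnt P m n s))).2.1 hne
  · rw [cnt_zero P m h]
    apply Finset.sum_eq_zero
    intro t _
    apply fl_zero
    rw [outF_empty P h]
    exact Finset.notMem_empty t

/-- predecessors of a set -/
noncomputable def preF (n : ℕ) (X : Finset Q) : Finset Q :=
  Finset.univ.filter (fun s => ∃ t ∈ X, (s, t) ∈ P.G n)

/-- the backwards cone of X at time n: `VF n X k` lives at time `n - k` -/
noncomputable def VF (n : ℕ) (X : Finset Q) : ℕ → Finset Q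
  | 0 => X
  | (k+1) => preF P (n - (k+1)) (VF n X k)

/-- edges leaking out of the cone at time `n - (k+1)` -/
noncomputable def leakF (n : ℕ) (X : Finset Q) (k : ℕ) : Finset (Q × Q) :=
  Finset.univ.filter (fun p =>
    p.1 ∈ VF P n X (k+1) ∧ (p.1, p.2) ∈ P.G (n - (k+1)) ∧ p.2 ∉ VF P n X k)

/-- total number of leaks of the cone of (n, X) -/
noncomputable def LK (n : ℕ) (X : Finset Q) : ℕ :=
  ∑ k ∈ Finset.range n, (leakF P n X k).card

lemma VF_shift (n : ℕ) (X : Finset Q) (k : ℕ) :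
    VF P (n+1) X (k+1) = VF P n (preF P n X) k := by
  induction k with
  | zero => simp [VF]
  | succ k ih =>
    show preF P (n + 1 - (k+2)) (VF P (n+1) X (k+1)) = preF P (n - (k+1)) (VF P n (preF P n X) k)
    rw [ih]
    congr 1
    omega

lemma leakF_shift (n : ℕ) (X : Finset Q) (k : ℕ) :
    leakF P (n+1) X (k+1) = leakF P n (preF P n X) k := by
  unfold leakF
  rw [VF_shift P n X (k+1), VF_shift P n X k]
  have : n + 1 - (k + 1 + 1) = n - (k+1) := by omega
  rw [this]

lemma LK_succ (n : ℕ) (X : Finset Q) :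
    LK P (n+1) X = (leakF P (n+1) X 0).card + LK P n (preF P n X) := by
  unfold LK
  have h1 : ∀ k ∈ Finset.range n, (leakF P (n+1) X (k+1)).card
      = (leakF P n (preF P n X) k).card := fun k _ => by rw [leakF_shift]
  rw [Finset.sum_range_succ', Finset.sum_congr rfl h1, add_comm]

/-- forward closure, starting at time n -/
def postIter (n : ℕ) (Y : Set Q) : ℕ → Set Q
  | 0 => Y
  | (k+1) => {v | ∃ u ∈ postIter n Y k, (u, v) ∈ P.G (n + k)}

/-- the accumulator associated to a backwards cone -/
noncomputable def TT (n : ℕ) (X : Finset Q) (j : ℕ) : Set Q :=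
  if j ≤ n then P.S j \ (VF P n X (n - j) : Finset Q)
  else postIter P n (P.S n \ (X : Finset Q)) (j - n)

lemma VF_mem {n : ℕ} {X : Finset Q} {k : ℕ} {s : Q} :
    s ∈ VF P n X (k+1) ↔ ∃ t ∈ VF P n X k, (s, t) ∈ P.G (n - (k+1)) := by
  show s ∈ preF P (n - (k+1)) (VF P n X k) ↔ _
  simp [preF]

lemma postIter_subset (n : ℕ) (Y : Set Q) (k : ℕ) :
    postIter P n Y (k+1) ⊆ P.S (n + k + 1) := by
  intro v hv
  obtain ⟨u, _, he⟩ := hv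
  rw [← P.him (n+k)]
  exact ⟨u, he⟩

lemma TT_acc (n : ℕ) (X : Finset Q) : IsAccumulator P.S P.G (TT P n X) := by
  constructor
  · intro j
    unfold TT
    split
    · exact Set.diff_subset
    · rename_i hj
      push_neg at hj
      have hj1 : j - n = (j - n - 1) + 1 := by omega
      rw [hj1]
      have hsub := postIter_subset P n (P.S n \ (X : Finset Q)) (j - n - 1)
      have harith : n + (j - n - 1) + 1 = j := by omega
      rwa [harith] at hsub
  · intro j s t hs he
    by_cases hj : j + 1 ≤ n
    · have hjn : j ≤ n := by omega
      rw [TT, if_pos hjn] at hs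
      rw [TT, if_pos hj]
      constructor
      · rw [← P.him j]; exact ⟨s, he⟩
      · intro htV
        apply hs.2
        have harith : n - j = (n - (j+1)) + 1 := by omega
        rw [harith]
        have harith2 : n - ((n - (j+1)) + 1) = j := by omega
        rw [Finset.mem_coe, VF_mem, harith2]
        exact ⟨t, htV, he⟩
    · by_cases hjn : j ≤ n
      · have hjeq : j = n := by omega
        subst hjeq
        rw [TT, if_pos (le_refl j)] at hs
        have h0 : VF P j X (j - j) = X := by
          have : j - j = 0 := by omega
          rw [this]; rfl
        rw [h0] at hs
        rw [TT, if_neg hj]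
        have h1 : j + 1 - j = 1 := by omega
        rw [h1]
        show ∃ u ∈ postIter P j (P.S j \ (X : Finset Q)) 0, (u, t) ∈ P.G (j + 0)
        exact ⟨s, hs, by simpa using he⟩
      · push_neg at hjn
        rw [TT, if_neg (by omega)] at hs
        rw [TT, if_neg (by omega)]
        have h1 : j + 1 - n = (j - n) + 1 := by omega
        rw [h1]
        refine ⟨s, hs, ?_⟩
        have h2 : n + (j - n) = j := by omega
        rwa [h2]

lemma LK_le (hcap : ∀ T, IsAccumulator P.S P.G T → (Entries P.G T).encard ≤ m)
    (n : ℕ) (X : Finset Q) : LK P n X ≤ m := by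
  set E' : Finset (ℕ × Q × Q) :=
    (Finset.range n).biUnion
      (fun k => (leakF P n X k).image (fun p => (n - (k+1), p.1, p.2))) with hE'
  have hinj : ∀ k : ℕ, Function.Injective (fun p : Q × Q => ((n - (k+1), p.1, p.2) : ℕ × Q × Q)) := by
    intro k a b hab
    simp only [Prod.mk.injEq] at hab
    exact Prod.ext hab.2.1 hab.2.2
  have hdisj : ∀ k1 ∈ Finset.range n, ∀ k2 ∈ Finset.range n, k1 ≠ k2 →
      Disjoint ((leakF P n X k1).image (fun p => ((n - (k1+1), p.1, p.2) : ℕ × Q × Q)))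
        ((leakF P n X k2).image (fun p => ((n - (k2+1), p.1, p.2) : ℕ × Q × Q))) := by
    intro k1 hk1 k2 hk2 hne
    rw [Finset.mem_range] at hk1 hk2
    rw [Finset.disjoint_left]
    rintro e he1 he2
    simp only [Finset.mem_image] at he1 he2
    obtain ⟨p1, _, rfl⟩ := he1
    obtain ⟨p2, _, heq⟩ := he2
    have : n - (k2+1) = n - (k1+1) := congrArg Prod.fst heq
    omega
  have hcard : E'.card = LK P n X := by
    rw [hE', Finset.card_biUnion hdisj]
    unfold LK
    exact Finset.sum_congr rfl fun k _ => Finset.card_image_of_injective _ (hinj k)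
  have hsub : (E' : Set (ℕ × Q × Q)) ⊆ Entries P.G (TT P n X) := by
    intro e he
    rw [Finset.mem_coe, hE', Finset.mem_biUnion] at he
    obtain ⟨k, hk, he⟩ := he
    rw [Finset.mem_range] at hk
    rw [Finset.mem_image] at he
    obtain ⟨p, hp, rfl⟩ := he
    rw [leakF, Finset.mem_filter] at hp
    obtain ⟨-, h1, h2, h3⟩ := hp
    refine ⟨h2, ?_, ?_⟩
    · show p.1 ∉ TT P n X (n - (k+1))
      rw [TT, if_pos (by omega : n - (k+1) ≤ n)]
      have harith : n - (n - (k+1)) = k + 1 := by omega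
      rw [harith]
      intro hmem
      exact hmem.2 h1
    · show p.2 ∈ TT P n X (n - (k+1) + 1)
      have harith : n - (k+1) + 1 = n - k := by omega
      rw [harith, TT, if_pos (by omega : n - k ≤ n)]
      have harith2 : n - (n - k) = k := by omega
      rw [harith2]
      refine ⟨?_, h3⟩
      rw [← harith, ← P.him (n - (k+1))]
      exact ⟨p.1, h2⟩
  have hm := hcap (TT P n X) (TT_acc P n X)
  have h2 : (E'.card : ℕ∞) ≤ (m : ℕ∞) := by
    rw [← Set.encard_coe_eq_coe_finsetCard]
    exact le_trans (Set.encard_mono hsub) hm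
  rw [hcard] at h2
  exact_mod_cast h2

/-- the main counting invariant -/
lemma main (hq : 2 ≤ Fintype.card Q)
    (hcap : ∀ T, IsAccumulator P.S P.G T → (Entries P.G T).encard ≤ m) :
    ∀ n (X : Finset Q), (X : Set Q) ⊆ P.S n → X.Nonempty →
      Fintype.card Q ^ (m + 1) ≤ Fintype.card Q ^ (LK P n X) * ∑ s ∈ X, cnt P m n s := by
  intro n
  induction n with
  | zero =>
    intro X hsub hne
    have hX : X = {q0} := by
      apply Finset.eq_singleton_iff_nonempty_unique_mem.mpr
      refine ⟨hne, fun x hx => ?_⟩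
      have hx2 := hsub hx
      rw [P.init] at hx2
      exact hx2
    subst hX
    rw [Finset.sum_singleton]
    have hc : cnt P m 0 q0 = Fintype.card Q ^ (m+1) := by simp [cnt]
    have hLK : LK P 0 {q0} = 0 := by simp [LK]
    rw [hc, hLK, pow_zero, one_mul]
  | succ n ih =>
    intro X hsub hne
    have hcardq : Fintype.card Q = (Finset.univ : Finset Q).card := Finset.card_univ.symm
    set Pf := preF P n X with hPf
    have hPfS : (Pf : Set Q) ⊆ P.S n := by
      intro s hs
      rw [Finset.mem_coe, hPf, preF, Finset.mem_filter] at hs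
      obtain ⟨-, t, -, he⟩ := hs
      rw [← P.hdom n]
      exact ⟨t, he⟩
    have hPfne : Pf.Nonempty := by
      obtain ⟨t, ht⟩ := hne
      have ht2 : t ∈ P.S (n+1) := hsub ht
      rw [← P.him n] at ht2
      obtain ⟨s, he⟩ := ht2
      refine ⟨s, ?_⟩
      rw [hPf, preF, Finset.mem_filter]
      exact ⟨Finset.mem_univ s, t, ht, he⟩
    have IH := ih Pf hPfS hPfne
    set ii : Q → ℕ := fun s => (outF P n s ∩ X).card with hii
    set kp : Q → ℕ := fun s => ∑ t ∈ X, fl P m n s t with hkp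
    set D := (leakF P (n+1) X 0).card with hD
    have hL : LK P (n+1) X = D + LK P n Pf := LK_succ P n X
    have hLle : LK P (n+1) X ≤ m := LK_le P m hcap (n+1) X
    have hV1 : VF P (n+1) X 1 = Pf := by
      show preF P (n+1-1) X = Pf
      norm_num [hPf]
    -- identify the first leak set
    have hleak : leakF P (n+1) X 0 =
        Pf.biUnion (fun s => (outF P n s \ X).image (fun t => (s, t))) := by
      ext p
      rw [leakF, Finset.mem_filter, hV1, Finset.mem_biUnion]
      constructor
      · rintro ⟨-, h1, h2, h3⟩
        refine ⟨p.1, h1, ?_⟩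
        rw [Finset.mem_image]
        refine ⟨p.2, ?_, rfl⟩
        rw [Finset.mem_sdiff]
        have : n + 1 - 1 = n := by omega
        rw [this] at h2
        refine ⟨?_, ?_⟩
        · rw [outF, Finset.mem_filter]; exact ⟨Finset.mem_univ _, h2⟩
        · exact h3
      · rintro ⟨s, hs, himg⟩
        rw [Finset.mem_image] at himg
        obtain ⟨t, ht, rfl⟩ := himg
        rw [Finset.mem_sdiff, outF, Finset.mem_filter] at ht
        refine ⟨Finset.mem_univ _, hs, ?_, ht.2⟩
        have : n + 1 - 1 = n := by omega
        rw [this]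
        exact ht.1.2
    have hDsum : D = ∑ s ∈ Pf, (dF P n s - ii s) := by
      rw [hD, hleak, Finset.card_biUnion]
      · apply Finset.sum_congr rfl
        intro s _
        rw [Finset.card_image_of_injective _ (fun a b hab => by
          simpa using congrArg Prod.snd hab)]
        have hident := Finset.card_inter_add_card_sdiff (outF P n s) X
        rw [hii]
        simp only []
        rw [dF]
        omega
      · intro s1 _ s2 _ hne12
        rw [Function.onFun, Finset.disjoint_left]
        rintro p hp1 hp2
        rw [Finset.mem_image] at hp1 hp2
        obtain ⟨t1, -, rfl⟩ := hp1
        obtain ⟨t2, -, heq⟩ := hp2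
        exact hne12 (congrArg Prod.fst heq).symm
    set b := m + 1 - LK P n Pf with hb
    have hLPf : LK P n Pf ≤ m := by omega
    have hbD : D + 1 ≤ b := by omega
    have hsum : Fintype.card Q ^ b ≤ ∑ s ∈ Pf, cnt P m n s := by
      have hexp : LK P n Pf + b = m + 1 := by omega
      rw [← hexp, pow_add] at IH
      exact Nat.le_of_mul_le_mul_left IH (Nat.pow_pos (by omega))
    have hk1 : ∀ s ∈ Pf, cnt P m n s ≤
        kp s + (dF P n s - ii s) * ((cnt P m n s + (dF P n s - 1)) / dF P n s) := by
      intro s _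
      have hsplit : ∑ t ∈ X, fl P m n s t + ∑ t ∈ Xᶜ, fl P m n s t = cnt P m n s := by
        rw [Finset.sum_add_sum_compl]
        exact fl_sum P m n s
      have h1 : ∑ t ∈ Xᶜ, fl P m n s t = ∑ t ∈ outF P n s \ X, fl P m n s t := by
        symm
        apply Finset.sum_subset
        · intro t ht
          rw [Finset.mem_sdiff] at ht
          rw [Finset.mem_compl]
          exact ht.2
        · intro t htc htn
          apply fl_zero
          intro hout
          rw [Finset.mem_compl] at htc
          exact htn (Finset.mem_sdiff.mpr ⟨hout, htc⟩)
      have h2 : ∑ t ∈ outF P n s \ X, fl P m n s t ≤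
          (outF P n s \ X).card * ((cnt P m n s + (dF P n s - 1)) / dF P n s) := by
        rw [← smul_eq_mul]
        apply Finset.sum_le_card_nsmul
        intro t ht
        exact fl_ceil P m (Finset.mem_sdiff.mp ht).1
      have h3 : (outF P n s \ X).card = dF P n s - ii s := by
        have hident := Finset.card_inter_add_card_sdiff (outF P n s) X
        rw [hii]
        simp only []
        rw [dF]
        omega
      have hkps : kp s = ∑ t ∈ X, fl P m n s t := rfl
      rw [h3] at h2
      omega
    have hk2 : ∀ s ∈ Pf, ii s * (cnt P m n s / dF P n s) ≤ kp s := by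
      intro s _
      have h1 : ∑ t ∈ outF P n s ∩ X, fl P m n s t ≤ kp s := by
        apply Finset.sum_le_sum_of_subset (Finset.inter_subset_right)
      have h2 : ii s * (cnt P m n s / dF P n s) ≤ ∑ t ∈ outF P n s ∩ X, fl P m n s t := by
        rw [← smul_eq_mul]
        apply Finset.card_nsmul_le_sum
        intro t ht
        exact fl_floor P m (Finset.mem_inter.mp ht).1
      exact le_trans h2 h1
    have hi1 : ∀ s ∈ Pf, 1 ≤ ii s := by
      intro s hs
      rw [hPf, preF, Finset.mem_filter] at hs
      obtain ⟨-, t, ht, he⟩ := hs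
      apply Finset.card_pos.mpr
      exact ⟨t, Finset.mem_inter.mpr ⟨by rw [outF, Finset.mem_filter]; exact ⟨Finset.mem_univ _, he⟩, ht⟩⟩
    have hid : ∀ s ∈ Pf, ii s ≤ dF P n s :=
      fun s _ => Finset.card_le_card Finset.inter_subset_left
    have hdq : ∀ s ∈ Pf, dF P n s ≤ Fintype.card Q := by
      intro s _
      rw [hcardq]
      exact Finset.card_le_card (Finset.subset_univ _)
    have hPcard : Pf.card ≤ Fintype.card Q := by
      rw [hcardq]
      exact Finset.card_le_card (Finset.subset_univ _)
    have hnum := numeric (Fintype.card Q) b D hq Pf hPfne hPcard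
      (cnt P m n) (dF P n) ii kp hbD hDsum hi1 hid hdq hsum hk1 hk2
    have hfin : ∑ s ∈ Pf, kp s ≤ ∑ t ∈ X, cnt P m (n+1) t := by
      have h1 : ∑ t ∈ X, cnt P m (n+1) t = ∑ s, kp s := by
        rw [hkp]
        simp only []
        rw [Finset.sum_comm]
        apply Finset.sum_congr rfl
        intro t _
        rfl
      rw [h1]
      exact Finset.sum_le_sum_of_subset (Finset.subset_univ _)
    have hexp2 : LK P (n+1) X + (b - D) = m + 1 := by omega
    calc Fintype.card Q ^ (m+1) = Fintype.card Q ^ (LK P (n+1) X) * Fintype.card Q ^ (b - D) := by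
          rw [← pow_add, hexp2]
      _ ≤ Fintype.card Q ^ (LK P (n+1) X) * ∑ t ∈ X, cnt P m (n+1) t :=
          Nat.mul_le_mul_left _ (le_trans hnum hfin)

lemma cnt_ge (hq : 2 ≤ Fintype.card Q)
    (hcap : ∀ T, IsAccumulator P.S P.G T → (Entries P.G T).encard ≤ m)
    {n : ℕ} {s : Q} (h : s ∈ P.S n) : Fintype.card Q ≤ cnt P m n s := by
  have hmain := main P m hq hcap n {s} (by
    intro x hx
    rw [Finset.coe_singleton, Set.mem_singleton_iff] at hx
    subst hx
    exact h) ⟨s, Finset.mem_singleton_self s⟩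
  rw [Finset.sum_singleton] at hmain
  set L := LK P n {s} with hL
  have hLm : L ≤ m := LK_le P m hcap n {s}
  have h2 : Fintype.card Q ^ L * Fintype.card Q ≤ Fintype.card Q ^ L * cnt P m n s := by
    calc Fintype.card Q ^ L * Fintype.card Q = Fintype.card Q ^ (L + 1) := by rw [pow_succ]
    _ ≤ Fintype.card Q ^ (m + 1) := Nat.pow_le_pow_right (by omega) (by omega)
    _ ≤ _ := hmain
  exact Nat.le_of_mul_le_mul_left h2 (Nat.pow_pos (by omega))

lemma fl_pos (hq : 2 ≤ Fintype.card Q)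
    (hcap : ∀ T, IsAccumulator P.S P.G T → (Entries P.G T).encard ≤ m)
    {n : ℕ} {s t : Q} (h : (s, t) ∈ P.G n) : 0 < fl P m n s t := by
  have hs : s ∈ P.S n := by rw [← P.hdom n]; exact ⟨t, h⟩
  have ht : t ∈ outF P n s := by rw [outF, Finset.mem_filter]; exact ⟨Finset.mem_univ _, h⟩
  have h1 := fl_floor P m ht
  have h2 : 1 ≤ cnt P m n s / dF P n s := by
    rw [Nat.one_le_div_iff]
    · calc dF P n s ≤ Fintype.card Q := by
            rw [← Finset.card_univ]
            exact Finset.card_le_card (Finset.subset_univ _)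
      _ ≤ cnt P m n s := cnt_ge P m hq hcap hs
    · exact Finset.card_pos.mpr ⟨t, ht⟩
  omega

lemma fl_mem {n : ℕ} {s t : Q} (h : 0 < fl P m n s t) : (s, t) ∈ P.G n := by
  by_contra hne
  have hnot : t ∉ outF P n s := by
    rw [outF, Finset.mem_filter]
    exact fun hh => hne hh.2
  rw [fl_zero P m hnot] at h
  omega

lemma Ncard0 : Nat.card (P.S 0) = 1 := by
  rw [P.init]
  exact Nat.card_unique

lemma sum_cnt0 : ∑ s, cnt P m 0 s = Fintype.card Q ^ (m + 1) := by
  show ∑ s, (if s = q0 then Fintype.card Q ^ (m + 1) else 0) = _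
  simp

/-- swap the two outer components of a double sigma -/
def swapEquiv {β : Q → Q → Type} : (Σ s : Q, Σ t : Q, β s t) ≃ (Σ t : Q, Σ s : Q, β s t) where
  toFun x := ⟨x.2.1, x.1, x.2.2⟩
  invFun x := ⟨x.2.1, x.1, x.2.2⟩
  left_inv := fun ⟨_, _, _⟩ => rfl
  right_inv := fun ⟨_, _, _⟩ => rfl

noncomputable def mid (n : ℕ) (s : Q) : Fin (cnt P m n s) ≃ (Σ t : Q, Fin (fl P m n s t)) :=
  Fintype.equivOfCardEq (by simp [fl_sum P m n s])

noncomputable def stepEquiv (n : ℕ) :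
    (Σ s : Q, Fin (cnt P m n s)) ≃ (Σ t : Q, Fin (cnt P m (n+1) t)) :=
  (Equiv.sigmaCongrRight (mid P m n)).trans
    (swapEquiv.trans (Equiv.sigmaCongrRight (fun t =>
      Fintype.equivOfCardEq (by simp [cnt_succ P m n t]; exact (Fintype.card_fin _).symm))))

lemma stepEquiv_fst (n : ℕ) (p : Σ s : Q, Fin (cnt P m n s)) :
    (stepEquiv P m n p).1 = (mid P m n p.1 p.2).1 := by
  obtain ⟨s, x⟩ := p
  rfl

lemma stepEquiv_edge (n : ℕ) (p : Σ s : Q, Fin (cnt P m n s)) :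
    (p.1, (stepEquiv P m n p).1) ∈ P.G n := by
  rw [stepEquiv_fst]
  apply fl_mem P m
  have := (mid P m n p.1 p.2).2.isLt
  omega

lemma stepEquiv_surj (hq : 2 ≤ Fintype.card Q)
    (hcap : ∀ T, IsAccumulator P.S P.G T → (Entries P.G T).encard ≤ m)
    {n : ℕ} {s t : Q} (h : (s, t) ∈ P.G n) :
    ∃ p : Σ s : Q, Fin (cnt P m n s), p.1 = s ∧ (stepEquiv P m n p).1 = t := by
  have hf : 0 < fl P m n s t := fl_pos P m hq hcap h
  refine ⟨⟨s, (mid P m n s).symm ⟨t, ⟨0, hf⟩⟩⟩, rfl, ?_⟩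
  rw [stepEquiv_fst]
  simp

noncomputable def addr :
    (n : ℕ) → Fin (Nat.card (P.S 0) * Fintype.card Q ^ (m + 1)) ≃ (Σ s : Q, Fin (cnt P m n s))
  | 0 => Fintype.equivOfCardEq (by
      rw [Fintype.card_fin, Ncard0, one_mul, Fintype.card_sigma]
      simp only [Fintype.card_fin]
      exact (sum_cnt0 P m).symm)
  | (n+1) => (addr n).trans (stepEquiv P m n)

end Play

end Stmt5Aux

/-- If every accumulator of a support-arena play has at most m entries, then the
play is the projection of a play of the (|S₀|·|Q|^(m+1))-population game. -/
theorem stmt5 [Fintype Q] (Δ : Q → A → Q → Prop) (q0 : Q) (hc : Complete Δ)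
    (P : SupportPlay Δ q0) (m : ℕ)
    (hcap : ∀ T, IsAccumulator P.S P.G T → (Entries P.G T).encard ≤ m) :
    ∃ (ρ : ℕ → Fin (Nat.card (P.S 0) * Fintype.card Q ^ (m + 1)) → Q) (acts : ℕ → A),
      IsPopPlay Δ q0 ρ acts ∧ ProjectsTo ρ acts P := by
  classical
  by_cases hq : 2 ≤ Fintype.card Q
  · -- main case
    refine ⟨fun n j => (Stmt5Aux.addr P m n j).1, P.act, ⟨?_, ?_⟩, ?_, fun _ => rfl, ?_⟩
    · -- initial
      funext j
      by_contra hne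
      have hx := (Stmt5Aux.addr P m 0 j).2.isLt
      have h0 : Stmt5Aux.cnt P m 0 (Stmt5Aux.addr P m 0 j).1 = 0 := by
        show (if (Stmt5Aux.addr P m 0 j).1 = q0 then Fintype.card Q ^ (m+1) else 0) = 0
        rw [if_neg hne]
      omega
    · -- transitions
      intro n j
      exact P.compat n _ (Stmt5Aux.stepEquiv_edge P m n (Stmt5Aux.addr P m n j))
    · -- supports
      intro n
      ext x
      simp only [Set.mem_setOf_eq]
      constructor
      · intro hx
        have hpos : 0 < Stmt5Aux.cnt P m n x := by
          have := Stmt5Aux.cnt_ge P m hq hcap hx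
          omega
        exact ⟨(Stmt5Aux.addr P m n).symm ⟨x, ⟨0, hpos⟩⟩, by
          rw [Equiv.apply_symm_apply]⟩
      · rintro ⟨j, rfl⟩
        by_contra hx
        have h0 := Stmt5Aux.cnt_zero P m hx
        have hlt := (Stmt5Aux.addr P m n j).2.isLt
        omega
    · -- graphs
      intro n
      ext p
      obtain ⟨a, b⟩ := p
      simp only [Set.mem_setOf_eq]
      constructor
      · intro hab
        obtain ⟨pp, h1, h2⟩ := Stmt5Aux.stepEquiv_surj P m hq hcap (n := n) hab
        refine ⟨(Stmt5Aux.addr P m n).symm pp, ?_, ?_⟩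
        · rw [Equiv.apply_symm_apply]; exact h1
        · show (Stmt5Aux.stepEquiv P m n (Stmt5Aux.addr P m n ((Stmt5Aux.addr P m n).symm pp))).1 = b
          rw [Equiv.apply_symm_apply]; exact h2
      · rintro ⟨j, h1, h2⟩
        have := Stmt5Aux.stepEquiv_edge P m n (Stmt5Aux.addr P m n j)
        rw [h1] at this
        have h2' : (Stmt5Aux.stepEquiv P m n (Stmt5Aux.addr P m n j)).1 = b := h2
        rwa [h2'] at this
  · -- degenerate case : |Q| = 1
    have hpos : 0 < Fintype.card Q := Fintype.card_pos_iff.mpr ⟨q0⟩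
    have hone : Fintype.card Q = 1 := by omega
    have hall : ∀ x : Q, x = q0 := fun x => Fintype.card_le_one_iff.mp (by omega) x q0
    have hS : ∀ n, P.S n = {q0} := by
      intro n
      induction n with
      | zero => exact P.init
      | succ n ih =>
        ext x
        simp only [Set.mem_singleton_iff]
        constructor
        · intro _; exact hall x
        · intro hx
          rw [hx]
          have hq0 : q0 ∈ P.S n := by rw [ih]; rfl
          rw [← P.hdom n] at hq0
          obtain ⟨t, ht⟩ := hq0
          have h2 : t ∈ P.S (n+1) := by rw [← P.him n]; exact ⟨q0, ht⟩
          rwa [hall t] at h2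
    have hGmem : ∀ n, (q0, q0) ∈ P.G n := by
      intro n
      have hq0 : q0 ∈ P.S n := by rw [hS n]; rfl
      rw [← P.hdom n] at hq0
      obtain ⟨t, ht⟩ := hq0
      have htq : t = q0 := hall t
      rwa [htq] at ht
    have hG : ∀ n, P.G n = {(q0, q0)} := by
      intro n
      ext p
      simp only [Set.mem_singleton_iff]
      constructor
      · intro _
        exact Prod.ext (hall p.1) (hall p.2)
      · intro hp
        rw [hp]
        exact hGmem n
    have hNpos : 0 < Nat.card (P.S 0) * Fintype.card Q ^ (m + 1) := by
      rw [Stmt5Aux.Ncard0, hone]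
      simp
    refine ⟨fun _ _ => q0, P.act, ⟨rfl, ?_⟩, ?_, fun _ => rfl, ?_⟩
    · intro n j
      apply P.compat n (q0, q0)
      rw [hG n]; rfl
    · intro n
      rw [hS n]
      ext x
      simp only [Set.mem_singleton_iff, Set.mem_setOf_eq]
      constructor
      · rintro rfl; exact ⟨⟨0, hNpos⟩, rfl⟩
      · rintro ⟨j, rfl⟩; rfl
    · intro n
      rw [hG n]
      ext p
      simp only [Set.mem_singleton_iff, Set.mem_setOf_eq]
      constructor
      · intro _
        exact ⟨⟨0, hNpos⟩, (hall p.1).symm, (hall p.2).symm⟩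
      · intro _
        exact Prod.ext (hall p.1) (hall p.2)
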